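/- Let B be an n × n real symmetric matrix with spectral decomposition B = Σᵢ λᵢ uᵢ uᵢᵀ, λ₁ ≥ ... ≥ λₙ. Define B̄ = Σ_{i=1}^{d} max(λᵢ, 0) uᵢ uᵢᵀ. Then for every symmetric positive semidefinite matrix C of rank at most d, ‖B̄ - B‖_F ≤ ‖C - B‖_F. -/

import Mathlib

open Matrix Finset

/-- Bilinear expansion of Frobenius inner product of two spectral combinations. -/
lemma sum_bilin {n : ℕ} (α β : Fin n → ℝ) (v w : Fin n → Fin n → ℝ) :
    ∑ a : Fin n, ∑ b : Fin n, (∑ i, α i * (v i a * v i b)) * (∑ j, β j * (w j a * w j b))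
      = ∑ i, ∑ j, α i * β j * (v i ⬝ᵥ w j) ^ 2 := by
  have key : ∀ (i j : Fin n), ∑ a : Fin n, ∑ b : Fin n,
      α i * β j * ((v i a * w j a) * (v i b * w j b)) = α i * β j * (v i ⬝ᵥ w j) ^ 2 := by
    intro i j
    have h2 : ∀ a : Fin n, ∑ b : Fin n, α i * β j * ((v i a * w j a) * (v i b * w j b))
        = (α i * β j * (v i a * w j a)) * (v i ⬝ᵥ w j) := by
      intro a
      rw [dotProduct, Finset.mul_sum]
      exact Finset.sum_congr rfl fun b _ => by ring
    rw [Finset.sum_congr rfl fun a _ => h2 a, ← Finset.sum_mul]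
    have h3 : ∑ a : Fin n, α i * β j * (v i a * w j a) = α i * β j * (v i ⬝ᵥ w j) := by
      rw [dotProduct, Finset.mul_sum]
    rw [h3]; ring
  calc ∑ a : Fin n, ∑ b : Fin n, (∑ i, α i * (v i a * v i b)) * (∑ j, β j * (w j a * w j b))
      = ∑ a : Fin n, ∑ b : Fin n, ∑ i, ∑ j,
          α i * β j * ((v i a * w j a) * (v i b * w j b)) := by
        refine Finset.sum_congr rfl fun a _ => Finset.sum_congr rfl fun b _ => ?_
        rw [Finset.sum_mul_sum]
        exact Finset.sum_congr rfl fun i _ => Finset.sum_congr rfl fun j _ => by ring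
    _ = ∑ i, ∑ j, ∑ a : Fin n, ∑ b : Fin n,
          α i * β j * ((v i a * w j a) * (v i b * w j b)) := by
        calc ∑ a : Fin n, ∑ b : Fin n, ∑ i, ∑ j,
              α i * β j * ((v i a * w j a) * (v i b * w j b))
            = ∑ a : Fin n, ∑ i, ∑ b : Fin n, ∑ j,
              α i * β j * ((v i a * w j a) * (v i b * w j b)) :=
              Finset.sum_congr rfl fun a _ => Finset.sum_comm
          _ = ∑ i, ∑ a : Fin n, ∑ b : Fin n, ∑ j,
              α i * β j * ((v i a * w j a) * (v i b * w j b)) := Finset.sum_comm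
          _ = ∑ i, ∑ a : Fin n, ∑ j, ∑ b : Fin n,
              α i * β j * ((v i a * w j a) * (v i b * w j b)) :=
              Finset.sum_congr rfl fun i _ => Finset.sum_congr rfl fun a _ =>
                Finset.sum_comm
          _ = ∑ i, ∑ j, ∑ a : Fin n, ∑ b : Fin n,
              α i * β j * ((v i a * w j a) * (v i b * w j b)) :=
              Finset.sum_congr rfl fun i _ => Finset.sum_comm
    _ = ∑ i, ∑ j, α i * β j * (v i ⬝ᵥ w j) ^ 2 :=
        Finset.sum_congr rfl fun i _ => Finset.sum_congr rfl fun j _ => key i j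

/-- Squared Frobenius norm of a spectral combination over an orthonormal family. -/
lemma sum_spectral_sq {n : ℕ} (α : Fin n → ℝ) (v : Fin n → Fin n → ℝ)
    (hv : ∀ i j : Fin n, v i ⬝ᵥ v j = if i = j then (1 : ℝ) else 0) :
    ∑ a : Fin n, ∑ b : Fin n, (∑ i, α i * (v i a * v i b)) ^ 2 = ∑ i, α i ^ 2 := by
  have := sum_bilin α α v v
  simp only [← sq] at this
  rw [this]
  refine Finset.sum_congr rfl fun i _ => ?_
  rw [Finset.sum_eq_single i]
  · rw [hv i i]; simp [sq]
  · intro j _ hj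
    rw [hv i j]; simp [Ne.symm hj]
  · simp

/-- Completeness of an orthonormal family of n vectors in ℝⁿ. -/
lemma orth_complete {n : ℕ} (v : Fin n → Fin n → ℝ)
    (hv : ∀ i j : Fin n, v i ⬝ᵥ v j = if i = j then (1 : ℝ) else 0) :
    ∀ a b : Fin n, ∑ i, v i a * v i b = if a = b then (1 : ℝ) else 0 := by
  set V : Matrix (Fin n) (Fin n) ℝ := Matrix.of v with hV
  have h1 : V * Vᵀ = 1 := by
    ext i j
    simp only [Matrix.mul_apply, Matrix.transpose_apply, Matrix.one_apply, hV, Matrix.of_apply]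
    exact hv i j
  have h2 : Vᵀ * V = 1 := mul_eq_one_comm.mp h1
  intro a b
  have := congrFun (congrFun h2 a) b
  simpa [Matrix.mul_apply, Matrix.transpose_apply, Matrix.one_apply, hV] using this

/-- Parseval-type identity: sum of squared coefficients equals squared norm. -/
lemma sum_proj {n : ℕ} (v : Fin n → Fin n → ℝ)
    (hv : ∀ i j : Fin n, v i ⬝ᵥ v j = if i = j then (1 : ℝ) else 0)
    (x : Fin n → ℝ) : ∑ i, (v i ⬝ᵥ x) ^ 2 = x ⬝ᵥ x := by
  have key : ∀ i : Fin n, (v i ⬝ᵥ x) ^ 2 = ∑ a : Fin n, ∑ b : Fin n,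
      (v i a * v i b) * (x a * x b) := by
    intro i
    rw [sq, dotProduct, Finset.sum_mul_sum]
    exact Finset.sum_congr rfl fun a _ => Finset.sum_congr rfl fun b _ => by ring
  simp only [key]
  rw [Finset.sum_comm]
  have : ∀ a : Fin n, ∑ i, ∑ b : Fin n, (v i a * v i b) * (x a * x b)
      = ∑ b : Fin n, (∑ i, v i a * v i b) * (x a * x b) := by
    intro a
    rw [Finset.sum_comm]
    exact Finset.sum_congr rfl fun b _ => (Finset.sum_mul _ _ _).symm
  simp only [this, orth_complete v hv]
  simp [dotProduct, sq]

lemma card_lt_filter {n d : ℕ} (h : d < n) :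
    ∑ i : Fin n, (if (i : ℕ) < d then (1 : ℝ) else 0) = d := by
  rw [Finset.sum_ite, Finset.sum_const_zero, add_zero]
  simp only [Finset.sum_const, nsmul_eq_mul, mul_one]
  norm_cast
  have : (Finset.univ.filter (fun i : Fin n => (i : ℕ) < d))
      = Finset.map (Fin.castLEEmb h.le) Finset.univ := by
    ext i
    simp only [Finset.mem_filter, Finset.mem_univ, true_and, Finset.mem_map,
      Fin.castLEEmb_apply]
    constructor
    · intro hi; exact ⟨⟨i, hi⟩, rfl⟩
    · rintro ⟨j, rfl⟩; exact j.2
  rw [this, Finset.card_map, Finset.card_univ, Fintype.card_fin]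

lemma substoch {n d : ℕ} (a p : Fin n → ℝ) (ha0 : ∀ i, 0 ≤ a i)
    (hmono : ∀ i j : Fin n, i ≤ j → a j ≤ a i)
    (hp0 : ∀ i, 0 ≤ p i) (hp1 : ∀ i, p i ≤ 1) (hps : ∑ i, p i ≤ d) :
    ∑ i, p i * a i ≤ ∑ i : Fin n, (if (i : ℕ) < d then a i else 0) := by
  by_cases hd : d < n
  · set t : ℝ := a ⟨d, hd⟩ with ht
    have ht0 : 0 ≤ t := ha0 _
    have key : ∀ i : Fin n, p i * a i - (if (i : ℕ) < d then a i else 0)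
        ≤ t * (p i - (if (i : ℕ) < d then 1 else 0)) := by
      intro i
      by_cases hi : (i : ℕ) < d
      · simp only [hi, if_pos]
        have hta : t ≤ a i := hmono i ⟨d, hd⟩ (by simp [Fin.le_def]; omega)
        nlinarith [hp1 i, hp0 i]
      · simp only [hi, if_neg, not_false_iff]
        have hta : a i ≤ t := hmono ⟨d, hd⟩ i (by simp [Fin.le_def]; omega)
        nlinarith [hp0 i]
    have hsum := Finset.sum_le_sum (fun i (_ : i ∈ Finset.univ) => key i)
    rw [Finset.sum_sub_distrib, ← Finset.mul_sum, Finset.sum_sub_distrib,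
      card_lt_filter hd] at hsum
    nlinarith [hsum, mul_nonneg ht0 (sub_nonneg.mpr hps)]
  · -- d ≥ n : every i satisfies i < d
    push_neg at hd
    have : ∀ i : Fin n, (if (i : ℕ) < d then a i else 0) = a i := by
      intro i; rw [if_pos (lt_of_lt_of_le i.2 hd)]
    simp only [this]
    exact Finset.sum_le_sum fun i _ => by nlinarith [hp0 i, hp1 i, ha0 i]

/-- Frobenius norm of a real square matrix. -/
noncomputable def frobNorm {n : ℕ} (A : Matrix (Fin n) (Fin n) ℝ) : ℝ :=
  Real.sqrt (∑ i, ∑ j, (A i j) ^ 2)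

/-- Eckart–Young-type optimality underlying classical MDS: truncating the
spectral decomposition of a symmetric matrix B to the top d eigenvalues,
with negative ones replaced by 0, gives the best PSD approximation of rank ≤ d
in Frobenius norm. -/
theorem stmt12 (n d : ℕ) (B : Matrix (Fin n) (Fin n) ℝ)
    (lam : Fin n → ℝ) (u : Fin n → (Fin n → ℝ))
    -- the eigenvalues are sorted in decreasing order
    (hsort : ∀ i j : Fin n, i ≤ j → lam j ≤ lam i)
    -- the eigenvectors are orthonormal
    (horth : ∀ i j : Fin n, u i ⬝ᵥ u j = if i = j then (1 : ℝ) else 0)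
    -- spectral decomposition of B
    (hB : B = ∑ i : Fin n, lam i • vecMulVec (u i) (u i))
    (C : Matrix (Fin n) (Fin n) ℝ) (hC : C.PosSemidef) (hCrank : C.rank ≤ d) :
    frobNorm ((∑ i : Fin n, (if (i : ℕ) < d then max (lam i) 0 else 0) •
        vecMulVec (u i) (u i)) - B) ≤ frobNorm (C - B) := by
  classical
  -- spectral data for C
  have hH : C.IsHermitian := hC.1
  set V : Matrix (Fin n) (Fin n) ℝ := (hH.eigenvectorUnitary : Matrix (Fin n) (Fin n) ℝ) with hV
  set c : Fin n → ℝ := hH.eigenvalues with hc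
  set w : Fin n → Fin n → ℝ := fun k a => V a k with hw
  have hc0 : ∀ j, 0 ≤ c j := fun j => hC.eigenvalues_nonneg j
  have hstar : star V * V = 1 := by
    have := hH.eigenvectorUnitary.2
    rw [Matrix.mem_unitaryGroup_iff'] at this
    exact this
  have hCentry : ∀ a b, C a b = ∑ j, c j * (w j a * w j b) := by
    intro a b
    conv_lhs => rw [hH.spectral_theorem, Unitary.conjStarAlgAut_apply]
    rw [Matrix.mul_apply]
    simp only [Matrix.mul_diagonal, Matrix.star_apply, star_trivial, Function.comp,
      RCLike.ofReal_real_eq_id, id_eq, hw, hV, hc]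
    exact Finset.sum_congr rfl fun j _ => by ring
  have horthw : ∀ i j : Fin n, w i ⬝ᵥ w j = if i = j then (1 : ℝ) else 0 := by
    intro i j
    have := congrFun (congrFun hstar i) j
    simpa [Matrix.mul_apply, Matrix.star_apply, Matrix.one_apply, dotProduct, hw] using this
  -- abbreviations
  set m : Fin n → ℝ := fun i => if (i : ℕ) < d then max (lam i) 0 else 0 with hm
  set a : Fin n → ℝ := fun i => (max (lam i) 0) ^ 2 with ha
  set Wf : Fin n → Fin n → ℝ := fun j i => (w j ⬝ᵥ u i) ^ 2 with hWf
  have hW0 : ∀ j i, 0 ≤ Wf j i := fun j i => sq_nonneg _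
  have hrow : ∀ j, ∑ i, Wf j i = 1 := by
    intro j
    have : ∀ i, Wf j i = (u i ⬝ᵥ w j) ^ 2 := fun i => by rw [hWf]; rw [dotProduct_comm]
    simp only [this]
    rw [sum_proj u horth (w j), horthw j j, if_pos rfl]
  have hcol : ∀ i, ∑ j, Wf j i = 1 := by
    intro i
    rw [hWf]
    rw [sum_proj w horthw (u i), horth i i, if_pos rfl]
  -- entrywise formulas
  have hBentry : ∀ a b, B a b = ∑ i, lam i * (u i a * u i b) := by
    intro a b
    rw [hB]
    simp [Matrix.sum_apply, Matrix.smul_apply, vecMulVec_apply, smul_eq_mul, mul_assoc]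
  have hLentry : ∀ x y, ((∑ i : Fin n, m i • vecMulVec (u i) (u i)) - B) x y
      = ∑ i, (m i - lam i) * (u i x * u i y) := by
    intro x y
    rw [Matrix.sub_apply, hBentry]
    rw [Matrix.sum_apply, ← Finset.sum_sub_distrib]
    refine Finset.sum_congr rfl fun i _ => ?_
    simp [Matrix.smul_apply, vecMulVec_apply, smul_eq_mul]
    ring
  -- reduce to sum of squares
  rw [frobNorm, frobNorm]
  apply Real.sqrt_le_sqrt
  -- compute LHS
  have lhs_eq : ∑ x : Fin n, ∑ y : Fin n,
      ((∑ i : Fin n, m i • vecMulVec (u i) (u i)) - B) x y ^ 2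
      = ∑ i, (m i - lam i) ^ 2 := by
    simp only [hLentry]
    exact sum_spectral_sq (fun i => m i - lam i) u horth
  have rhs_eq : ∑ x : Fin n, ∑ y : Fin n, (C - B) x y ^ 2
      = ∑ j, c j ^ 2 - 2 * (∑ j, ∑ i, c j * lam i * Wf j i) + ∑ i, lam i ^ 2 := by
    have expand : ∀ x y : Fin n, (C - B) x y ^ 2
        = (∑ j, c j * (w j x * w j y)) ^ 2
          - 2 * ((∑ j, c j * (w j x * w j y)) * (∑ i, lam i * (u i x * u i y)))
          + (∑ i, lam i * (u i x * u i y)) ^ 2 := by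
      intro x y
      rw [Matrix.sub_apply, hCentry, hBentry]
      ring
    simp only [expand, Finset.sum_add_distrib, Finset.sum_sub_distrib, ← Finset.mul_sum]
    rw [sum_spectral_sq c w horthw, sum_spectral_sq lam u horth, sum_bilin c lam w u]
  rw [lhs_eq, rhs_eq]
  -- key identity: difference of the two "diagonal" sums
  have diff : ∑ i, lam i ^ 2 - ∑ i, (m i - lam i) ^ 2
      = ∑ i : Fin n, (if (i : ℕ) < d then a i else 0) := by
    rw [← Finset.sum_sub_distrib]
    refine Finset.sum_congr rfl fun i _ => ?_
    by_cases hi : (i : ℕ) < d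
    · simp only [hm, ha, hi, if_pos]
      rcases le_total (lam i) 0 with h | h
      · rw [max_eq_right h]; ring
      · rw [max_eq_left h]; ring
    · simp only [hm, ha, hi, if_neg, not_false_iff]
      ring
  -- the central inequality
  have central : 2 * (∑ j, ∑ i, c j * lam i * Wf j i) - ∑ j, c j ^ 2
      ≤ ∑ i : Fin n, (if (i : ℕ) < d then a i else 0) := by
    have step1 : 2 * (∑ j, ∑ i, c j * lam i * Wf j i) - ∑ j, c j ^ 2
        = ∑ j, ∑ i, (2 * c j * lam i - c j ^ 2) * Wf j i := by
      have perj : ∀ j, ∑ i, (2 * c j * lam i - c j ^ 2) * Wf j i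
          = 2 * (∑ i, c j * lam i * Wf j i) - c j ^ 2 := by
        intro j
        have : ∀ i, (2 * c j * lam i - c j ^ 2) * Wf j i
            = 2 * (c j * lam i * Wf j i) - c j ^ 2 * Wf j i := fun i => by ring
        simp only [this]
        rw [Finset.sum_sub_distrib, ← Finset.mul_sum, ← Finset.mul_sum, hrow j, mul_one]
      simp only [perj]
      rw [Finset.sum_sub_distrib, ← Finset.mul_sum]
    have step2 : ∑ j, ∑ i, (2 * c j * lam i - c j ^ 2) * Wf j i
        ≤ ∑ j, ∑ i, (if c j ≠ 0 then a i else 0) * Wf j i := by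
      refine Finset.sum_le_sum fun j _ => Finset.sum_le_sum fun i _ => ?_
      by_cases hcj : c j = 0
      · simp [hcj]
      · rw [if_pos hcj]
        refine mul_le_mul_of_nonneg_right ?_ (hW0 j i)
        simp only [ha]
        rcases le_total 0 (lam i) with h | h
        · rw [max_eq_left h]; nlinarith [sq_nonneg (lam i - c j)]
        · rw [max_eq_right h]; nlinarith [hc0 j, mul_nonneg (hc0 j) (neg_nonneg.mpr h)]
    set p : Fin n → ℝ := fun i => ∑ j, if c j ≠ 0 then Wf j i else 0 with hp
    have step3 : ∑ j, ∑ i, (if c j ≠ 0 then a i else 0) * Wf j i = ∑ i, p i * a i := by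
      rw [Finset.sum_comm]
      refine Finset.sum_congr rfl fun i _ => ?_
      rw [hp, Finset.sum_mul]
      refine Finset.sum_congr rfl fun j _ => ?_
      by_cases hcj : c j = 0 <;> simp [hcj] <;> ring
    have hp0 : ∀ i, 0 ≤ p i := by
      intro i
      refine Finset.sum_nonneg fun j _ => ?_
      by_cases hcj : c j = 0 <;> simp [hcj, hW0 j i]
    have hp1 : ∀ i, p i ≤ 1 := by
      intro i
      rw [← hcol i, hp]
      refine Finset.sum_le_sum fun j _ => ?_
      by_cases hcj : c j = 0 <;> simp [hcj, hW0 j i]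
    have hps : ∑ i, p i ≤ (d : ℝ) := by
      have hcard : (Finset.univ.filter fun j => c j ≠ 0).card ≤ d := by
        have hre := hH.rank_eq_card_non_zero_eigs
        rw [Fintype.card_subtype] at hre
        rw [← hc] at hre
        rw [hre] at hCrank
        exact hCrank
      calc ∑ i, p i = ∑ j, ∑ i, (if c j ≠ 0 then Wf j i else 0) := by
            rw [hp, Finset.sum_comm]
        _ = ∑ j, (if c j ≠ 0 then (1:ℝ) else 0) := by
            refine Finset.sum_congr rfl fun j _ => ?_
            by_cases hcj : c j = 0 <;> simp [hcj, hrow j]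
        _ = ((Finset.univ.filter fun j => c j ≠ 0).card : ℝ) := by
            rw [Finset.sum_ite, Finset.sum_const_zero, add_zero, Finset.sum_const,
              nsmul_eq_mul, mul_one]
        _ ≤ (d : ℝ) := by exact_mod_cast hcard
    have amono : ∀ i j : Fin n, i ≤ j → a j ≤ a i := by
      intro i j hij
      simp only [ha]
      have h1 : max (lam j) 0 ≤ max (lam i) 0 := max_le_max (hsort i j hij) le_rfl
      have h2 : (0:ℝ) ≤ max (lam j) 0 := le_max_right _ _
      nlinarith
    have ha0 : ∀ i, 0 ≤ a i := fun i => sq_nonneg _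
    rw [step1]
    calc ∑ j, ∑ i, (2 * c j * lam i - c j ^ 2) * Wf j i
        ≤ ∑ j, ∑ i, (if c j ≠ 0 then a i else 0) * Wf j i := step2
      _ = ∑ i, p i * a i := step3
      _ ≤ ∑ i : Fin n, (if (i : ℕ) < d then a i else 0) :=
          substoch a p ha0 amono hp0 hp1 hps
  linarith [central, diff]
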